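/- Let μ and μ' be two stable matchings of the same stable marriage instance. Define τ : M → W by letting τ(m) be whichever of μ(m) and μ'(m) the man m prefers less (the ≻_m-worse of the two, taking τ(m) = μ(m) if μ(m) = μ'(m)). Then τ is a bijection from M to W and τ is a stable matching. -/

import Mathlib

/-- A stable marriage instance: finite sets `M` of men and `W` of women of equal
positive cardinality, with strict total preference orders for each agent. -/
structure SMInstance (M W : Type) [Fintype M] [Fintype W] where
  card_eq : Fintype.card M = Fintype.card W
  card_pos : 1 ≤ Fintype.card M
  prefM : M → W → W → Prop
  prefW : W → M → M → Prop
  prefM_sto : ∀ m, IsStrictTotalOrder W (prefM m)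
  prefW_sto : ∀ w, IsStrictTotalOrder M (prefW w)

/-- A pair `(m, w)` blocks the matching `μ` if `w ≻_m μ(m)` and `m ≻_w μ⁻¹(w)`. -/
def SMInstance.Blocks {M W : Type} [Fintype M] [Fintype W]
    (I : SMInstance M W) (μ : M ≃ W) (m : M) (w : W) : Prop :=
  I.prefM m w (μ m) ∧ I.prefW w m (μ.symm w)

/-- A matching is stable if no pair blocks it. -/
def SMInstance.Stable {M W : Type} [Fintype M] [Fintype W]
    (I : SMInstance M W) (μ : M ≃ W) : Prop :=
  ∀ m w, ¬ I.Blocks μ m w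

/-- If two men each have `w` as a partner in one of the matchings and each strictly
prefers `w` to his partner in the other matching, we get a blocking pair. -/
lemma mixed_block {M W : Type} [Fintype M] [Fintype W]
    (I : SMInstance M W) (μ μ' : M ≃ W) (hμ : I.Stable μ) (hμ' : I.Stable μ')
    {m1 m2 : M} {w : W} (hne : m1 ≠ m2) (h1 : μ m1 = w) (h2 : μ' m2 = w)
    (p1 : I.prefM m1 w (μ' m1)) (p2 : I.prefM m2 w (μ m2)) : False := by
  have hs1 : μ.symm w = m1 := by rw [← h1]; exact μ.symm_apply_apply m1
  have hs2 : μ'.symm w = m2 := by rw [← h2]; exact μ'.symm_apply_apply m2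
  rcases (haveI := I.prefW_sto w; trichotomous_of (I.prefW w) m1 m2) with h | h | h
  · exact hμ' m1 w ⟨p1, by rw [hs2]; exact h⟩
  · exact hne h
  · exact hμ m2 w ⟨p2, by rw [hs1]; exact h⟩

/-- Key "opposite interests" lemma: if `m'` is the `τ`-partner of `w` and `m'' ≠ m'`
is the `μ`-partner of `w`, then `w` strictly prefers `m'` to `m''`. -/
lemma key_lemma {M W : Type} [Fintype M] [Fintype W]
    (I : SMInstance M W) (μ μ' : M ≃ W) (hμ' : I.Stable μ')
    (τ : M → W) (hτinj : Function.Injective τ)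
    (F1 : ∀ m, τ m = μ m ∨ τ m = μ' m)
    (F2' : ∀ m, τ m = μ' m → μ m ≠ μ' m → I.prefM m (μ m) (μ' m))
    {w : W} {m' : M} (hm' : τ m' = w)
    {m'' : M} (hne : m'' ≠ m') (hw : μ m'' = w) : I.prefW w m' m'' := by
  -- the τ-partner of w gets w from μ', since he can't get it from μ
  have hμ'm' : μ' m' = w := by
    rcases F1 m' with h | h
    · exact absurd (μ.injective (hw.trans (hm'.symm.trans h))) hne
    · exact h.symm.trans hm'
  have hs' : μ'.symm w = m' := by rw [← hμ'm']; exact μ'.symm_apply_apply m'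
  -- m'' is matched with w by μ but not by τ, so τ m'' = μ' m'' ≠ w
  have hτm'' : τ m'' = μ' m'' := by
    rcases F1 m'' with h | h
    · exact absurd (hτinj (h.trans (hw.trans hm'.symm))) hne
    · exact h
  have hnem'' : μ m'' ≠ μ' m'' := by
    intro h
    exact hne (hτinj (hτm''.trans (h.symm.trans (hw.trans hm'.symm))))
  have p'' : I.prefM m'' w (μ' m'') := hw ▸ F2' m'' hτm'' hnem''
  rcases (haveI := I.prefW_sto w; trichotomous_of (I.prefW w) m' m'') with h | h | h
  · exact h
  · exact absurd h.symm hne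
  · exact (hμ' m'' w ⟨p'', by rw [hs']; exact h⟩).elim

/-- One case of the stability argument for `τ`. -/
lemma stab_case {M W : Type} [Fintype M] [Fintype W]
    (I : SMInstance M W) (μ μ' : M ≃ W) (hμ : I.Stable μ) (hμ' : I.Stable μ')
    (τ : M → W) (hτinj : Function.Injective τ)
    (F1 : ∀ m, τ m = μ m ∨ τ m = μ' m)
    (F2' : ∀ m, τ m = μ' m → μ m ≠ μ' m → I.prefM m (μ m) (μ' m))
    {m : M} {w : W} (hb1 : I.prefM m w (μ m))
    {m' : M} (hm' : τ m' = w) (hb2 : I.prefW w m m') : False := by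
  by_cases hc : μ.symm w = m'
  · exact hμ m w ⟨hb1, by rw [hc]; exact hb2⟩
  · have hkey : I.prefW w m' (μ.symm w) :=
      key_lemma I μ μ' hμ' τ hτinj F1 F2' hm' hc (μ.apply_symm_apply w)
    exact hμ m w ⟨hb1, (I.prefW_sto w).trans m m' (μ.symm w) hb2 hkey⟩

/-- Lattice "join for men": if each man is given the one of his partners in the two
stable matchings `μ`, `μ'` that he prefers less, the result is a bijection and a
stable matching. -/
theorem men_worst_of_two_is_stable {M W : Type} [Fintype M] [Fintype W]
    (I : SMInstance M W) (μ μ' : M ≃ W) (hμ : I.Stable μ) (hμ' : I.Stable μ')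
    (τ : M → W)
    (hτ_eq : ∀ m : M, μ m = μ' m → τ m = μ m)
    (hτ_pref : ∀ m : M, I.prefM m (μ m) (μ' m) → τ m = μ' m)
    (hτ_pref' : ∀ m : M, I.prefM m (μ' m) (μ m) → τ m = μ m) :
    Function.Bijective τ ∧
      ∃ e : M ≃ W, (∀ m : M, e m = τ m) ∧ I.Stable e := by
  classical
  have asymM : ∀ m (a b : W), I.prefM m a b → I.prefM m b a → False := fun m a b h1 h2 =>
    (I.prefM_sto m).irrefl a ((I.prefM_sto m).trans a b a h1 h2)
  -- τ picks one of the two partners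
  have F1 : ∀ m, τ m = μ m ∨ τ m = μ' m := by
    intro m
    rcases (haveI := I.prefM_sto m; trichotomous_of (I.prefM m) (μ m) (μ' m)) with h | h | h
    · exact Or.inr (hτ_pref m h)
    · exact Or.inl (hτ_eq m h)
    · exact Or.inl (hτ_pref' m h)
  -- τ picks the worse one
  have F2 : ∀ m, τ m = μ m → μ m ≠ μ' m → I.prefM m (μ' m) (μ m) := by
    intro m h hne
    rcases (haveI := I.prefM_sto m; trichotomous_of (I.prefM m) (μ m) (μ' m)) with h' | h' | h'
    · exact absurd (((hτ_pref m h').symm.trans h).symm) hne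
    · exact absurd h' hne
    · exact h'
  have F2' : ∀ m, τ m = μ' m → μ m ≠ μ' m → I.prefM m (μ m) (μ' m) := by
    intro m h hne
    rcases (haveI := I.prefM_sto m; trichotomous_of (I.prefM m) (μ m) (μ' m)) with h' | h' | h'
    · exact h'
    · exact absurd h' hne
    · exact absurd ((hτ_pref' m h').symm.trans h) hne
  -- the "better" map σ
  let σ : M → W := fun m => if I.prefM m (μ m) (μ' m) then μ m else μ' m
  have hσ_cases : ∀ m, σ m = μ m ∨ σ m = μ' m := by
    intro m
    by_cases h : I.prefM m (μ m) (μ' m)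
    · exact Or.inl (if_pos h)
    · exact Or.inr (if_neg h)
  have hσpos : ∀ m, I.prefM m (μ m) (μ' m) → σ m = μ m := fun m h => if_pos h
  have hσneg : ∀ m, ¬ I.prefM m (μ m) (μ' m) → σ m = μ' m := fun m h => if_neg h
  -- σ picks the better one
  have G2 : ∀ m, σ m = μ m → μ m ≠ μ' m → I.prefM m (μ m) (μ' m) := by
    intro m h hne
    by_cases h' : I.prefM m (μ m) (μ' m)
    · exact h'
    · exact absurd (((hσneg m h').symm.trans h).symm) hne
  have G2' : ∀ m, σ m = μ' m → μ m ≠ μ' m → I.prefM m (μ' m) (μ m) := by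
    intro m h hne
    by_cases h' : I.prefM m (μ m) (μ' m)
    · exact absurd ((hσpos m h').symm.trans h) hne
    · rcases (haveI := I.prefM_sto m; trichotomous_of (I.prefM m) (μ m) (μ' m)) with h'' | h'' | h''
      · exact absurd h'' h'
      · exact absurd h'' hne
      · exact h''
  -- σ is injective
  have hσinj : Function.Injective σ := by
    intro m1 m2 hss
    by_contra hne
    rcases hσ_cases m1 with h1 | h1 <;> rcases hσ_cases m2 with h2 | h2
    · exact hne (μ.injective (h1.symm.trans (hss.trans h2)))
    · -- σ m1 = μ m1 = σ m2 = μ' m2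
      have hn1 : μ m1 ≠ μ' m1 := fun h =>
        hne (μ'.injective (h.symm.trans (h1.symm.trans (hss.trans h2))))
      have hn2 : μ m2 ≠ μ' m2 := fun h =>
        hne (μ.injective (h1.symm.trans (hss.trans (h2.trans h.symm))))
      have p1 : I.prefM m1 (σ m1) (μ' m1) := h1 ▸ G2 m1 h1 hn1
      have p2 : I.prefM m2 (σ m2) (μ m2) := h2 ▸ G2' m2 h2 hn2
      exact mixed_block I μ μ' hμ hμ' hne h1.symm (hss ▸ h2.symm) p1 (hss ▸ p2)
    · -- σ m1 = μ' m1 = σ m2 = μ m2 : symmetric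
      have hn1 : μ m1 ≠ μ' m1 := fun h =>
        hne (μ.injective (h.trans (h1.symm.trans (hss.trans h2))))
      have hn2 : μ m2 ≠ μ' m2 := fun h =>
        hne (μ'.injective (h1.symm.trans (hss.trans (h2.trans h))))
      have p1 : I.prefM m1 (σ m1) (μ m1) := h1 ▸ G2' m1 h1 hn1
      have p2 : I.prefM m2 (σ m2) (μ' m2) := h2 ▸ G2 m2 h2 hn2
      exact mixed_block I μ' μ hμ' hμ hne h1.symm (hss ▸ h2.symm) p1 (hss ▸ p2)
    · exact hne (μ'.injective (h1.symm.trans (hss.trans h2)))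
  have hσbij : Function.Bijective σ :=
    (Fintype.bijective_iff_injective_and_card σ).mpr ⟨hσinj, I.card_eq⟩
  -- τ is injective
  have hτinj : Function.Injective τ := by
    intro m1 m2 htt
    by_contra hne
    obtain ⟨m3, hm3⟩ := hσbij.2 (τ m1)
    rcases F1 m1 with h1 | h1 <;> rcases F1 m2 with h2 | h2
    · exact hne (μ.injective (h1.symm.trans (htt.trans h2)))
    · -- τ m1 = μ m1, τ m2 = μ' m2
      have hn1 : μ m1 ≠ μ' m1 := fun h =>
        hne (μ'.injective (h.symm.trans (h1.symm.trans (htt.trans h2))))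
      have hn2 : μ m2 ≠ μ' m2 := fun h =>
        hne (μ.injective (h1.symm.trans (htt.trans (h2.trans h.symm))))
      rcases hσ_cases m3 with h3 | h3
      · -- μ m3 = τ m1 = μ m1, so m3 = m1
        have hm31 : m3 = m1 := μ.injective ((h3.symm.trans hm3).trans h1)
        have : I.prefM m1 (μ m1) (μ' m1) := G2 m1 (by rw [hm31] at h3; exact h3) hn1
        exact asymM m1 (μ m1) (μ' m1) this (F2 m1 h1 hn1)
      · -- μ' m3 = τ m1 = τ m2 = μ' m2, so m3 = m2
        have hm32 : m3 = m2 := μ'.injective (((h3.symm.trans hm3).trans htt).trans h2)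
        have : I.prefM m2 (μ' m2) (μ m2) :=
          G2' m2 (by rw [hm32] at h3; exact h3) hn2
        exact asymM m2 (μ m2) (μ' m2) (F2' m2 h2 hn2) this
    · -- τ m1 = μ' m1, τ m2 = μ m2 : symmetric
      have hn1 : μ m1 ≠ μ' m1 := fun h =>
        hne (μ.injective (h.trans (h1.symm.trans (htt.trans h2))))
      have hn2 : μ m2 ≠ μ' m2 := fun h =>
        hne (μ'.injective (h1.symm.trans (htt.trans (h2.trans h))))
      rcases hσ_cases m3 with h3 | h3
      · have hm32 : m3 = m2 := μ.injective (((h3.symm.trans hm3).trans htt).trans h2)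
        have : I.prefM m2 (μ m2) (μ' m2) :=
          G2 m2 (by rw [hm32] at h3; exact h3) hn2
        exact asymM m2 (μ m2) (μ' m2) this (F2 m2 h2 hn2)
      · have hm31 : m3 = m1 := μ'.injective ((h3.symm.trans hm3).trans h1)
        have : I.prefM m1 (μ' m1) (μ m1) := G2' m1 (by rw [hm31] at h3; exact h3) hn1
        exact asymM m1 (μ m1) (μ' m1) (F2' m1 h1 hn1) this
    · exact hne (μ'.injective (h1.symm.trans (htt.trans h2)))
  have hτbij : Function.Bijective τ :=
    (Fintype.bijective_iff_injective_and_card τ).mpr ⟨hτinj, I.card_eq⟩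
  refine ⟨hτbij, Equiv.ofBijective τ hτbij, fun m => rfl, ?_⟩
  -- stability
  set e := Equiv.ofBijective τ hτbij with he
  intro m w hb
  obtain ⟨hb1, hb2⟩ := hb
  have hb1' : I.prefM m w (τ m) := hb1
  have hm' : τ (e.symm w) = w := e.apply_symm_apply w
  rcases F1 m with h | h
  · exact stab_case I μ μ' hμ hμ' τ hτinj F1 F2' (h ▸ hb1') hm' hb2
  · exact stab_case I μ' μ hμ' hμ τ hτinj (fun m => (F1 m).symm)
      (fun m h hne => F2 m h (Ne.symm hne)) (h ▸ hb1') hm' hb2
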